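/- Let C be a class of distributions on a countable domain X, let α ≥ 1, and let V_sub be a subtractive adaptive adversary with fixed constant budget η. If there exist constants γ', ζ ∈ (0,1) such that for every m ∈ ℕ the adversary V_sub successfully (2αη + 2γ', ζ)-confuses C-generated samples of size m, then C is neither adaptively subtractively α-robustly learnable nor adaptively additively α-robustly learnable. -/

import Mathlib

open scoped ENNReal NNReal

/-- Total variation distance between two discrete distributions. -/
noncomputable def tv {X : Type*} (p q : PMF X) : ℝ :=
  (∑' x, |(p x).toReal - (q x).toReal|) / 2

/-- The distribution of an i.i.d. sample of size `m` from `p`, viewed as a multiset. -/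
noncomputable def iid {X : Type*} (p : PMF X) : ℕ → PMF (Multiset X)
  | 0 => PMF.pure 0
  | n + 1 => (iid p n).bind fun s => p.map fun x => x ::ₘ s

/-- `|Q|^m` : first draw `q ∼ Q`, then an i.i.d. sample `S ∼ q^m`. -/
noncomputable def metaSample {X : Type*} (Q : PMF (PMF X)) (m : ℕ) : PMF (Multiset X) :=
  Q.bind fun q => iid q m

/-- An adaptive adversary: a randomized map from samples (finite multisets) to samples. -/
abbrev Adversary (X : Type*) := Multiset X → PMF (Multiset X)

/-- `V(P)`: the distribution of `V S` for `S ∼ P` (including internal randomness). -/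
noncomputable def advPush {X : Type*} (V : Adversary X) (P : PMF (Multiset X)) :
    PMF (Multiset X) := P.bind V

/-- An additive adversary only adds points: `S ⊆ V(S)` almost surely. -/
def IsAdditive {X : Type*} (V : Adversary X) : Prop :=
  ∀ S T, T ∈ (V S).support → S ≤ T

/-- A subtractive adversary only removes points: `V(S) ⊆ S` almost surely. -/
def IsSubtractive {X : Type*} (V : Adversary X) : Prop :=
  ∀ S T, T ∈ (V S).support → T ≤ S

/-- Fixed constant budget `η`: `|V(S)|` depends only on `|S|` (via `c`), and for every `m`,
`η m − 1 < m·budget(V,m) ≤ η m` where `m·budget(V,m) = ||V(S)| − |S||`. -/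
def FixedBudget {X : Type*} (V : Adversary X) (η : ℝ) : Prop :=
  ∃ c : ℕ → ℕ, (∀ S T, T ∈ (V S).support → Multiset.card T = c (Multiset.card S)) ∧
    ∀ m : ℕ, η * m - 1 < |(c m : ℝ) - m| ∧ |(c m : ℝ) - m| ≤ η * m

/-- Fixed constant budget `η` for an additive adversary (`m·budget(V,m) = |V(S)| − |S|`). -/
def FixedBudgetAdd {X : Type*} (V : Adversary X) (η : ℝ) : Prop :=
  ∃ c : ℕ → ℕ, (∀ S T, T ∈ (V S).support → Multiset.card T = c (Multiset.card S)) ∧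
    ∀ m : ℕ, η * m - 1 < (c m : ℝ) - m ∧ (c m : ℝ) - m ≤ η * m

/-- Fixed constant budget `η` for a subtractive adversary (`m·budget(V,m) = |S| − |V(S)|`). -/
def FixedBudgetSub {X : Type*} (V : Adversary X) (η : ℝ) : Prop :=
  ∃ c : ℕ → ℕ, (∀ S T, T ∈ (V S).support → Multiset.card T = c (Multiset.card S)) ∧
    ∀ m : ℕ, η * m - 1 < (m : ℝ) - c m ∧ (m : ℝ) - c m ≤ η * m

/-- Probability of an event under a discrete distribution. -/
noncomputable def probEvent {β : Type*} (P : PMF β) (E : Set β) : ℝ≥0∞ :=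
  P.toOuterMeasure E

/-- `A` with sample complexity `mc` learns the class `C` against adversary `V`,
up to error `bound + ε` with confidence `1 − δ` once `m ≥ mc ε δ`. -/
def RobustLearnerFor {X : Type*} (C : Set (PMF X)) (A : Multiset X → PMF X)
    (mc : ℝ → ℝ → ℕ) (V : Adversary X) (bound : ℝ) : Prop :=
  ∀ p ∈ C, ∀ ε δ : ℝ, 0 < ε → ε < 1 → 0 < δ → δ < 1 →
    ∀ m : ℕ, mc ε δ ≤ m →
      1 - ENNReal.ofReal δ ≤
        probEvent ((iid p m).bind V) {T | tv (A T) p ≤ bound + ε}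

/-- `C` is adaptively α-robustly learnable w.r.t. the single adversary `V` with budget `η`. -/
def RobustlyLearnableWrt {X : Type*} (C : Set (PMF X)) (α : ℝ)
    (V : Adversary X) (η : ℝ) : Prop :=
  ∃ A mc, RobustLearnerFor C A mc V (α * η)

/-- `V` (with budget `η`) is a universal α-adversary for `C`. -/
def UniversalAdversary {X : Type*} (C : Set (PMF X)) (α : ℝ)
    (V : Adversary X) (η : ℝ) : Prop :=
  ¬ RobustlyLearnableWrt C α V η

/-- `C` is adaptively α-robustly learnable w.r.t. a class `𝒱` of adversaries
(each given with its budget). -/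
def RobustlyLearnableWrtClass {X : Type*} (C : Set (PMF X)) (α : ℝ)
    (𝒱 : Set (Adversary X × ℝ)) : Prop :=
  ∃ A mc, ∀ Vη ∈ 𝒱, RobustLearnerFor C A mc Vη.1 (α * Vη.2)

/-- `C` is adaptively additively α-robustly learnable: one learner works simultaneously
against all additive adaptive adversaries with fixed constant budgets. -/
def AdditivelyRobustlyLearnable {X : Type*} (C : Set (PMF X)) (α : ℝ) : Prop :=
  ∃ A mc, ∀ V : Adversary X, ∀ η : ℝ, 0 < η → η < 1 →
    IsAdditive V → FixedBudgetAdd V η → RobustLearnerFor C A mc V (α * η)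

/-- `C` is adaptively subtractively α-robustly learnable. -/
def SubtractivelyRobustlyLearnable {X : Type*} (C : Set (PMF X)) (α : ℝ) : Prop :=
  ∃ A mc, ∀ V : Adversary X, ∀ η : ℝ, 0 < η → η < 1 →
    IsSubtractive V → FixedBudgetSub V η → RobustLearnerFor C A mc V (α * η)

/-- The pair `(V1, V2)` successfully `(γ,ζ)`-confuses `C`-generated samples of size `m`. -/
def ConfusesPair {X : Type*} (C : Set (PMF X)) (V1 V2 : Adversary X)
    (γ ζ : ℝ) (m : ℕ) : Prop :=
  ∃ p ∈ C, ∃ Q : PMF (PMF X), Q.support ⊆ C ∧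
    (∀ q ∈ Q.support, γ < tv p q) ∧
    tv (advPush V1 (metaSample Q m)) (advPush V2 (iid p m)) < ζ

/-- A single adversary `V` successfully `(γ,ζ)`-confuses `C`-generated samples of size `m`. -/
def Confuses {X : Type*} (C : Set (PMF X)) (V : Adversary X) (γ ζ : ℝ) (m : ℕ) : Prop :=
  ConfusesPair C V V γ ζ m

/-- `p` is the distribution `p_{i,j,k} = (1 − 1/j)·δ_{(0,0)} + (1/j − 1/k)·U_{B_i×{2j+1}}
 + (1/k)·δ_{(i,2j+2)}` on `ℕ × ℕ`. -/
def IsPijk (B : ℕ → Finset ℕ) (i j k : ℕ) (p : PMF (ℕ × ℕ)) : Prop :=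
  ∀ x : ℕ × ℕ,
    p x = (1 - ((j : ℝ≥0∞))⁻¹) * (if x = (0, 0) then 1 else 0)
      + (((j : ℝ≥0∞))⁻¹ - ((k : ℝ≥0∞))⁻¹) *
          (if x.1 ∈ B i ∧ x.2 = 2 * j + 1 then (((B i).card : ℝ≥0∞))⁻¹ else 0)
      + ((k : ℝ≥0∞))⁻¹ * (if x = (i, 2 * j + 2) then 1 else 0)

/-- The class `C_g = {p_{i,j,g(j)} : i, j ∈ ℕ}` (for the meaningful parameters). -/
def Cg (B : ℕ → Finset ℕ) (g : ℕ → ℕ) : Set (PMF (ℕ × ℕ)) :=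
  {p | ∃ i j : ℕ, 1 ≤ j ∧ j < g j ∧ (B i).Nonempty ∧ IsPijk B i j (g j) p}

/-- `g` is superlinear: `g(n)/n → ∞`. -/
def Superlinear (g : ℕ → ℕ) : Prop :=
  Filter.Tendsto (fun n => (g n : ℝ) / n) Filter.atTop Filter.atTop

/- ===================== auxiliary lemmas ===================== -/

section St8Aux
variable {T S A B D : Type*}

lemma st8_pmf_ne_top (μ : PMF T) (t : T) : μ t ≠ ∞ := (μ.apply_lt_top t).ne

lemma st8_pmf_tsum_toReal (μ : PMF T) : ∑' t, (μ t).toReal = 1 := by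
  rw [← ENNReal.tsum_toReal_eq (fun t => st8_pmf_ne_top μ t), μ.tsum_coe, ENNReal.toReal_one]

lemma st8_pmf_summable_toReal (μ : PMF T) : Summable fun t => (μ t).toReal :=
  ENNReal.summable_toReal (by rw [μ.tsum_coe]; exact ENNReal.one_ne_top)

lemma st8_summable_abs_sub (μ ν : PMF T) :
    Summable fun t => |(μ t).toReal - (ν t).toReal| :=
  ((st8_pmf_summable_toReal μ).sub (st8_pmf_summable_toReal ν)).abs

lemma tv_comm (μ ν : PMF T) : tv μ ν = tv ν μ := by
  unfold tv; congr 1; exact tsum_congr fun t => abs_sub_comm _ _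

lemma tv_triangle (μ ν ρ : PMF T) : tv μ ν ≤ tv μ ρ + tv ρ ν := by
  unfold tv
  rw [← add_div]
  apply div_le_div_of_nonneg_right ?_ (by norm_num)
  calc ∑' t, |(μ t).toReal - (ν t).toReal|
      ≤ ∑' t, (|(μ t).toReal - (ρ t).toReal| + |(ρ t).toReal - (ν t).toReal|) := by
        refine Summable.tsum_le_tsum (fun t => abs_sub_le _ _ _) (st8_summable_abs_sub μ ν)
          ((st8_summable_abs_sub μ ρ).add (st8_summable_abs_sub ρ ν))
    _ = _ := Summable.tsum_add (st8_summable_abs_sub μ ρ) (st8_summable_abs_sub ρ ν)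

lemma tv_master (μ ν : PMF T) (g : T → ℝ) (h0 : ∀ t, 0 ≤ g t) (h1 : ∀ t, g t ≤ 1) :
    (∑' t, (μ t).toReal * g t) - (∑' t, (ν t).toReal * g t) ≤ tv μ ν := by
  set f1 : T → ℝ := fun t => (μ t).toReal with hf1
  set f2 : T → ℝ := fun t => (ν t).toReal with hf2
  have hs1 : Summable f1 := st8_pmf_summable_toReal μ
  have hs2 : Summable f2 := st8_pmf_summable_toReal ν
  have hsg1 : Summable fun t => f1 t * g t :=
    hs1.of_nonneg_of_le (fun t => mul_nonneg ENNReal.toReal_nonneg (h0 t))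
      (fun t => by nlinarith [h0 t, h1 t, ENNReal.toReal_nonneg (a := μ t)])
  have hsg2 : Summable fun t => f2 t * g t :=
    hs2.of_nonneg_of_le (fun t => mul_nonneg ENNReal.toReal_nonneg (h0 t))
      (fun t => by nlinarith [h0 t, h1 t, ENNReal.toReal_nonneg (a := ν t)])
  have habs : Summable fun t => |f1 t - f2 t| := st8_summable_abs_sub μ ν
  have hpos : Summable fun t => max (f1 t - f2 t) 0 :=
    habs.of_nonneg_of_le (fun t => le_max_right _ _)
      (fun t => max_le (le_abs_self _) (abs_nonneg _))
  have step1 : (∑' t, f1 t * g t) - (∑' t, f2 t * g t) = ∑' t, (f1 t - f2 t) * g t := by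
    rw [← Summable.tsum_sub hsg1 hsg2]; exact tsum_congr fun t => (sub_mul _ _ _).symm
  have step2 : ∑' t, (f1 t - f2 t) * g t ≤ ∑' t, max (f1 t - f2 t) 0 := by
    refine Summable.tsum_le_tsum (fun t => ?_) (by simpa [sub_mul] using hsg1.sub hsg2) hpos
    rcases le_or_gt (f1 t - f2 t) 0 with h | h
    · exact (mul_nonpos_of_nonpos_of_nonneg h (h0 t)).trans (le_max_right _ _)
    · calc (f1 t - f2 t) * g t ≤ (f1 t - f2 t) * 1 :=
            mul_le_mul_of_nonneg_left (h1 t) h.le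
        _ ≤ max (f1 t - f2 t) 0 := by rw [mul_one]; exact le_max_left _ _
  have step3 : ∑' t, max (f1 t - f2 t) 0 = tv μ ν := by
    have hsub : Summable fun t => f1 t - f2 t := hs1.sub hs2
    have hid : ∀ t, max (f1 t - f2 t) 0 = (|f1 t - f2 t| + (f1 t - f2 t)) / 2 := by
      intro t
      rcases le_total 0 (f1 t - f2 t) with h | h
      · rw [max_eq_left h, abs_of_nonneg h]; ring
      · rw [max_eq_right h, abs_of_nonpos h]; ring
    calc ∑' t, max (f1 t - f2 t) 0
        = ∑' t, (|f1 t - f2 t| + (f1 t - f2 t)) / 2 := tsum_congr hid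
      _ = ((∑' t, |f1 t - f2 t|) + ∑' t, (f1 t - f2 t)) / 2 := by
          rw [← Summable.tsum_add habs hsub, ← tsum_div_const]
      _ = tv μ ν := by
          rw [Summable.tsum_sub hs1 hs2, st8_pmf_tsum_toReal, st8_pmf_tsum_toReal, sub_self, add_zero]
          rfl
  calc _ = ∑' t, (f1 t - f2 t) * g t := step1
    _ ≤ _ := step2.trans step3.le

/-- probability of an event, as a real number. -/
noncomputable def evt (μ : PMF T) (E : Set T) : ℝ := (probEvent μ E).toReal

lemma st8_probEvent_le_one (μ : PMF T) (E : Set T) : probEvent μ E ≤ 1 := by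
  rw [probEvent, PMF.toOuterMeasure_apply]
  exact le_of_le_of_eq (ENNReal.tsum_le_tsum fun t => Set.indicator_le_self E _ t) μ.tsum_coe

lemma st8_probEvent_ne_top (μ : PMF T) (E : Set T) : probEvent μ E ≠ ∞ :=
  ((st8_probEvent_le_one μ E).trans_lt ENNReal.one_lt_top).ne

lemma evt_nonneg (μ : PMF T) (E : Set T) : 0 ≤ evt μ E := ENNReal.toReal_nonneg

lemma evt_le_one (μ : PMF T) (E : Set T) : evt μ E ≤ 1 := by
  rw [evt, ← ENNReal.toReal_one]
  exact ENNReal.toReal_mono ENNReal.one_ne_top (st8_probEvent_le_one μ E)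

lemma evt_eq_tsum (μ : PMF T) (E : Set T) :
    evt μ E = ∑' t, (μ t).toReal * E.indicator (fun _ => (1:ℝ)) t := by
  rw [evt, probEvent, PMF.toOuterMeasure_apply,
    ENNReal.tsum_toReal_eq (fun t => _root_.ne_top_of_le_ne_top (st8_pmf_ne_top μ t)
      (Set.indicator_le_self E _ t))]
  refine tsum_congr fun t => ?_
  by_cases ht : t ∈ E <;> simp [Set.indicator_apply, ht]

lemma evt_sub_le_tv (μ ν : PMF T) (E : Set T) : evt μ E - evt ν E ≤ tv μ ν := by
  rw [evt_eq_tsum, evt_eq_tsum]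
  refine tv_master μ ν _ (fun t => ?_) (fun t => ?_) <;>
    by_cases ht : t ∈ E <;> simp [Set.indicator_apply, ht]

lemma evt_bind (P : PMF S) (f : S → PMF T) (E : Set T) :
    evt (P.bind f) E = ∑' a, (P a).toReal * evt (f a) E := by
  have h1 : ∀ a, P a * (f a).toOuterMeasure E ≠ ∞ := fun a =>
    ENNReal.mul_ne_top (st8_pmf_ne_top P a) (st8_probEvent_ne_top (f a) E)
  simp only [evt, probEvent, PMF.toOuterMeasure_bind_apply, ENNReal.tsum_toReal_eq h1,
    ENNReal.toReal_mul]

lemma evt_bind_sub_le (P1 P2 : PMF S) (f : S → PMF T) (E : Set T) :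
    evt (P1.bind f) E - evt (P2.bind f) E ≤ tv P1 P2 := by
  rw [evt_bind, evt_bind]
  exact tv_master P1 P2 _ (fun a => evt_nonneg _ _) (fun a => evt_le_one _ _)

lemma evt_disjoint_le (μ : PMF T) (E F : Set T) (h : E ∩ F = ∅) (δ : ℝ)
    (hδ0 : 0 ≤ δ) (hδ1 : δ ≤ 1)
    (hF : 1 - ENNReal.ofReal δ ≤ probEvent μ F) : evt μ E ≤ δ := by
  have hsum : probEvent μ E + probEvent μ F ≤ 1 := by
    rw [probEvent, probEvent, PMF.toOuterMeasure_apply, PMF.toOuterMeasure_apply,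
      ← ENNReal.tsum_add]
    refine le_of_le_of_eq (ENNReal.tsum_le_tsum fun t => ?_) μ.tsum_coe
    by_cases htE : t ∈ E
    · have htF : t ∉ F := fun htF => Set.eq_empty_iff_forall_notMem.1 h t ⟨htE, htF⟩
      simp [Set.indicator_apply, htE, htF]
    · by_cases htF : t ∈ F <;> simp [Set.indicator_apply, htE, htF]
  have h1 : probEvent μ E ≤ 1 - probEvent μ F :=
    ENNReal.le_sub_of_add_le_right (st8_probEvent_ne_top μ F) hsum
  have h2 : (1:ℝ≥0∞) - probEvent μ F ≤ 1 - (1 - ENNReal.ofReal δ) :=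
    tsub_le_tsub_left hF 1
  have h3 : (1:ℝ≥0∞) - (1 - ENNReal.ofReal δ) = ENNReal.ofReal δ :=
    ENNReal.sub_sub_cancel ENNReal.one_ne_top (ENNReal.ofReal_le_one.2 hδ1)
  have h4 := (h1.trans h2).trans_eq h3
  calc evt μ E ≤ (ENNReal.ofReal δ).toReal :=
        ENNReal.toReal_mono ENNReal.ofReal_ne_top h4
    _ = δ := ENNReal.toReal_ofReal hδ0

lemma evt_ge (μ : PMF T) (E : Set T) (δ : ℝ) (hδ0 : 0 ≤ δ)
    (hF : 1 - ENNReal.ofReal δ ≤ probEvent μ E) : 1 - δ ≤ evt μ E := by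
  rcases le_or_gt 1 δ with h | h
  · linarith [evt_nonneg μ E]
  have heq : ((1 : ℝ≥0∞) - ENNReal.ofReal δ).toReal = 1 - δ := by
    rw [ENNReal.toReal_sub_of_le (ENNReal.ofReal_le_one.2 h.le) ENNReal.one_ne_top,
      ENNReal.toReal_one, ENNReal.toReal_ofReal hδ0]
  rw [evt, ← heq]
  exact ENNReal.toReal_mono (st8_probEvent_ne_top μ E) hF

lemma st8_bind_congr (p : PMF A) (f g : A → PMF B) (h : ∀ a ∈ p.support, f a = g a) :
    p.bind f = p.bind g := by
  ext b
  simp only [PMF.bind_apply]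
  refine tsum_congr fun a => ?_
  by_cases ha : p a = 0
  · simp [ha]
  · rw [h a (by rwa [PMF.mem_support_iff])]

/-- first-coordinate marginal mass. -/
noncomputable def margFst (J : PMF (A × B)) (a : A) : ℝ≥0∞ := ∑' b, J (a, b)

lemma margFst_le_one (J : PMF (A × B)) (a : A) : margFst J a ≤ 1 := by
  have h : margFst J a ≤ ∑' x : A × B, J x :=
    ENNReal.tsum_comp_le_tsum_of_injective
      (f := fun b => ((a, b) : A × B)) (fun b b' hb => (Prod.mk.injEq _ _ _ _ ▸ hb).2) J
  rw [J.tsum_coe] at h; exact h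

lemma margFst_ne_top (J : PMF (A × B)) (a : A) : margFst J a ≠ ∞ :=
  ((margFst_le_one J a).trans_lt ENNReal.one_lt_top).ne

open scoped Classical in
lemma map_fst_apply (J : PMF (A × B)) (a : A) : (J.map Prod.fst) a = margFst J a := by
  rw [PMF.map_apply]
  rw [show (∑' (x : A × B), if a = x.1 then J x else 0)
      = ∑' (a' : A) (b : B), (if a = a' then J (a', b) else 0) from
    ENNReal.tsum_prod (f := fun a' b => if a = a' then J (a', b) else 0)]
  rw [show ∑' (a' : A) (b : B), (if a = a' then J (a', b) else 0)
      = ∑' (a' : A), (if a = a' then (∑' b : B, J (a', b)) else 0) from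
    tsum_congr fun a' => by by_cases h : a = a' <;> simp [h]]
  rw [tsum_eq_single a (fun a' ha' => by rw [if_neg (Ne.symm ha')]), if_pos rfl]
  rfl

/-- conditional distribution of the second coordinate given the first. -/
noncomputable def condPMF (J : PMF (A × B)) (dflt : PMF B) (a : A) : PMF B :=
  if h : margFst J a = 0 then dflt else
    ⟨fun b => J (a, b) * (margFst J a)⁻¹, by
      refine ENNReal.summable.hasSum_iff.2 ?_
      rw [ENNReal.tsum_mul_right]
      exact ENNReal.mul_inv_cancel h (margFst_ne_top J a)⟩

lemma condPMF_apply (J : PMF (A × B)) (dflt : PMF B) (a : A) (h : margFst J a ≠ 0) (b : B) :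
    condPMF J dflt a b = J (a, b) * (margFst J a)⁻¹ := by
  have e : condPMF J dflt a = _ := dif_neg h
  rw [e]; rfl

lemma condPMF_support (J : PMF (A × B)) (dflt : PMF B) (a : A) (b : B)
    (hb : b ∈ (condPMF J dflt a).support) :
    b ∈ dflt.support ∨ (a, b) ∈ J.support := by
  by_cases h : margFst J a = 0
  · left; have e : condPMF J dflt a = dflt := dif_pos h
    rwa [e] at hb
  · right
    rw [PMF.mem_support_iff] at hb ⊢
    rw [condPMF_apply J dflt a h] at hb
    exact fun hz => hb (by simp [hz])

/-- Disintegration: `J.bind K` can be computed by first sampling the first marginal,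
then the conditional, then applying `K`. -/
lemma st8_disint {C : Type*} (J : PMF (A × B)) (dflt : PMF B) (K : A × B → PMF C) :
    J.bind K = (J.map Prod.fst).bind
      (fun a => (condPMF J dflt a).bind (fun b => K (a, b))) := by
  ext c
  rw [PMF.bind_apply, PMF.bind_apply]
  rw [show (∑' (x : A × B), J x * K x c) = ∑' (a : A) (b : B), J (a, b) * K (a, b) c from
    ENNReal.tsum_prod (f := fun a b => J (a, b) * K (a, b) c)]
  refine tsum_congr fun a => ?_
  rw [map_fst_apply, PMF.bind_apply]
  by_cases h : margFst J a = 0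
  · have hz : ∀ b, J (a, b) = 0 := fun b => (ENNReal.tsum_eq_zero.1 h) b
    simp [h, hz]
  · rw [show ∑' b, condPMF J dflt a b * K (a, b) c
        = ∑' b, (J (a, b) * K (a, b) c) * (margFst J a)⁻¹ from
      tsum_congr fun b => by rw [condPMF_apply J dflt a h]; ring]
    rw [ENNReal.tsum_mul_right, ← mul_assoc,
      mul_comm (margFst J a) (∑' (i : B), J (a, i) * (K (a, i)) c), mul_assoc,
      ENNReal.mul_inv_cancel h (margFst_ne_top J a), mul_one]

end St8Aux

section St8Setting
variable {X : Type*}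

lemma iid_support_card (p : PMF X) (m : ℕ) :
    ∀ S ∈ (iid p m).support, Multiset.card S = m := by
  induction m with
  | zero =>
      intro S hS
      rw [show iid p 0 = PMF.pure 0 from rfl, PMF.support_pure] at hS
      rw [Set.mem_singleton_iff] at hS
      simp [hS]
  | succ n ih =>
      intro S hS
      rw [show iid p (n+1) = (iid p n).bind fun s => p.map fun x => x ::ₘ s from rfl,
        PMF.mem_support_bind_iff] at hS
      obtain ⟨s, hs, hS⟩ := hS
      rw [PMF.mem_support_map_iff] at hS
      obtain ⟨x, _, rfl⟩ := hS
      simp [ih s hs]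

lemma metaSample_support_card (Q : PMF (PMF X)) (m : ℕ) :
    ∀ S ∈ (metaSample Q m).support, Multiset.card S = m := by
  intro S hS
  rw [metaSample, PMF.mem_support_bind_iff] at hS
  obtain ⟨q, _, hS⟩ := hS
  exact iid_support_card q m S hS

lemma metaSample_bind (Q : PMF (PMF X)) (m : ℕ) (V : Adversary X) :
    (metaSample Q m).bind V = Q.bind (fun q => (iid q m).bind V) := by
  rw [metaSample, PMF.bind_bind]

/-- The two key probability estimates a successful learner would give. -/
lemma learn_gap (C : Set (PMF X)) (A : Multiset X → PMF X) (mc : ℝ → ℝ → ℕ)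
    (V : Adversary X) (bd : ℝ) (hL : RobustLearnerFor C A mc V bd)
    (ε δ : ℝ) (hε : 0 < ε) (hε1 : ε < 1) (hδ : 0 < δ) (hδ1 : δ < 1)
    (p : PMF X) (hp : p ∈ C) (Q : PMF (PMF X)) (hQC : Q.support ⊆ C)
    (hsep : ∀ q ∈ Q.support, 2 * bd + 2 * ε < tv p q) :
    1 - δ ≤ evt ((iid p (mc ε δ)).bind V) {T | tv (A T) p ≤ bd + ε} ∧
      evt ((metaSample Q (mc ε δ)).bind V) {T | tv (A T) p ≤ bd + ε} ≤ δ := by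
  set m := mc ε δ with hm
  set E : Set (Multiset X) := {T | tv (A T) p ≤ bd + ε} with hE
  constructor
  · exact evt_ge _ _ δ hδ.le (hL p hp ε δ hε hε1 hδ hδ1 m le_rfl)
  · rw [metaSample_bind, evt_bind]
    have hterm : ∀ q, (Q q).toReal * evt ((iid q m).bind V) E ≤ (Q q).toReal * δ := by
      intro q
      by_cases hq : q ∈ Q.support
      · refine mul_le_mul_of_nonneg_left ?_ ENNReal.toReal_nonneg
        refine evt_disjoint_le _ E {T | tv (A T) q ≤ bd + ε} ?_ δ hδ.le hδ1.le
          (hL q (hQC hq) ε δ hε hε1 hδ hδ1 m le_rfl)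
        rw [Set.eq_empty_iff_forall_notMem]
        rintro T ⟨hT1, hT2⟩
        simp only [hE, Set.mem_setOf_eq] at hT1 hT2
        have := tv_triangle p q (A T)
        rw [tv_comm p (A T)] at this
        exact absurd (hsep q hq) (not_lt.2 (this.trans (by linarith)))
      · rw [PMF.mem_support_iff, not_not] at hq
        simp [hq]
    have hsum1 : Summable fun q => (Q q).toReal * evt ((iid q m).bind V) E :=
      (st8_pmf_summable_toReal Q).of_nonneg_of_le
        (fun q => mul_nonneg ENNReal.toReal_nonneg (evt_nonneg _ _))
        (fun q => by
          nlinarith [evt_le_one ((iid q m).bind V) E, evt_nonneg ((iid q m).bind V) E,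
            ENNReal.toReal_nonneg (a := Q q)])
    have hsum2 : Summable fun q => (Q q).toReal * δ :=
      (st8_pmf_summable_toReal Q).mul_right δ
    calc ∑' q, (Q q).toReal * evt ((iid q m).bind V) E
        ≤ ∑' q, (Q q).toReal * δ := Summable.tsum_le_tsum hterm hsum1 hsum2
      _ = δ := by rw [tsum_mul_right, st8_pmf_tsum_toReal, one_mul]

end St8Setting

/-- If a subtractive adaptive adversary `V_sub` with fixed constant budget
`η` successfully `(2αη + 2γ', ζ)`-confuses `C`-generated samples of every size `m`, then `C`
is neither adaptively subtractively nor adaptively additively α-robustly learnable. -/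
theorem stmt8 {X : Type*} [Countable X] (C : Set (PMF X)) (α : ℝ) (hα : 1 ≤ α)
    (Vs : Adversary X) (hVs : IsSubtractive Vs) (η : ℝ) (hη : η ∈ Set.Ioo (0 : ℝ) 1)
    (hb : FixedBudgetSub Vs η)
    (γ' ζ : ℝ) (hγ' : γ' ∈ Set.Ioo (0 : ℝ) 1) (hζ : ζ ∈ Set.Ioo (0 : ℝ) 1)
    (hconf : ∀ m : ℕ, Confuses C Vs (2 * α * η + 2 * γ') ζ m) :
    ¬ SubtractivelyRobustlyLearnable C α ∧ ¬ AdditivelyRobustlyLearnable C α := by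
  obtain ⟨hη0, hη1⟩ := hη
  obtain ⟨hγ0, hγ1⟩ := hγ'
  obtain ⟨hζ0, hζ1⟩ := hζ
  constructor
  · -- subtractive case
    rintro ⟨A, mc, hlearn⟩
    have hL : RobustLearnerFor C A mc Vs (α * η) := hlearn Vs η hη0 hη1 hVs hb
    set ε := γ' with hεdef
    set δ := (1 - ζ) / 8 with hδdef
    have hδ0 : 0 < δ := by rw [hδdef]; linarith
    have hδ1 : δ < 1 := by rw [hδdef]; linarith
    obtain ⟨p, hp, Q, hQC, hsep, hclose⟩ := hconf (mc ε δ)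
    have hsep' : ∀ q ∈ Q.support, 2 * (α * η) + 2 * ε < tv p q := by
      intro q hq
      calc 2 * (α * η) + 2 * ε = 2 * α * η + 2 * ε := by ring
        _ < tv p q := hsep q hq
    obtain ⟨g1, g2⟩ := learn_gap C A mc Vs (α * η) hL ε δ hγ0 hγ1 hδ0 hδ1 p hp Q hQC hsep'
    have hB := evt_sub_le_tv ((iid p (mc ε δ)).bind Vs) ((metaSample Q (mc ε δ)).bind Vs)
      {T | tv (A T) p ≤ α * η + ε}
    have hcl2 : tv ((iid p (mc ε δ)).bind Vs) ((metaSample Q (mc ε δ)).bind Vs) < ζ := by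
      rw [show (iid p (mc ε δ)).bind Vs = advPush Vs (iid p (mc ε δ)) from rfl,
        show (metaSample Q (mc ε δ)).bind Vs = advPush Vs (metaSample Q (mc ε δ)) from rfl,
        tv_comm]
      exact hclose
    linarith
  · -- additive case
    rintro ⟨A, mc, hlearn⟩
    haveI : DecidableEq X := Classical.decEq X
    set ε := γ' with hεdef
    set δ := (1 - ζ) / 8 with hδdef
    have hδ0 : 0 < δ := by rw [hδdef]; linarith
    have hδ1 : δ < 1 := by rw [hδdef]; linarith
    set m := mc ε δ with hmdef
    obtain ⟨p, hp, Q, hQC, hsep, hclose⟩ := hconf m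
    obtain ⟨c, hc, hcb⟩ := hb
    obtain ⟨x₀, hx₀⟩ := p.support_nonempty
    have hcle : ∀ n, c n ≤ n := by
      intro n
      obtain ⟨T, hT⟩ := (Vs (Multiset.replicate n x₀)).support_nonempty
      have h1 := hc _ _ hT
      have h2 := Multiset.card_le_card (hVs _ _ hT)
      rw [Multiset.card_replicate] at h1 h2
      omega
    set P1 := iid p m with hP1
    set P2 := metaSample Q m with hP2
    set src : Bool → PMF (Multiset X) := fun b => if b then P1 else P2 with hsrc
    have hsrcT : src true = P1 := rfl
    have hsrcF : src false = P2 := rfl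
    set J : Bool → PMF (Multiset X × Multiset X) :=
      fun b => (src b).bind (fun S => (Vs S).map (fun T => (T, S - T))) with hJ
    set dflt : PMF (Multiset X) := PMF.pure (Multiset.replicate (m - c m) x₀) with hdflt
    set cnd : Bool → Multiset X → PMF (Multiset X) := fun b => condPMF (J b) dflt with hcnd
    set Vadd : Bool → Adversary X := fun b S =>
      if Multiset.card S = m then (Vs S).bind (fun T => (cnd b T).map (fun D => S + D))
      else PMF.pure (S + Multiset.replicate (Multiset.card S - c (Multiset.card S)) x₀)
      with hVadd
    set Va : Adversary X := fun S => (PMF.uniformOfFintype Bool).bind (fun b => Vadd b S)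
      with hVa
    -- support facts
    have hsrc_card : ∀ b, ∀ S ∈ (src b).support, Multiset.card S = m := by
      intro b
      cases b
      · exact metaSample_support_card Q m
      · exact iid_support_card p m
    have hJcard : ∀ b x, x ∈ (J b).support → Multiset.card x.2 = m - c m := by
      intro b x hx
      simp only [hJ] at hx
      rw [PMF.mem_support_bind_iff] at hx
      obtain ⟨S, hS, hx⟩ := hx
      rw [PMF.mem_support_map_iff] at hx
      obtain ⟨T, hT, rfl⟩ := hx
      have hTS := hVs _ _ hT
      have hcardT := hc _ _ hT
      have hcardS := hsrc_card b S hS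
      show Multiset.card (S - T) = m - c m
      rw [Multiset.card_sub hTS, hcardT, hcardS]
    have hcnd_card : ∀ b T D, D ∈ (cnd b T).support → Multiset.card D = m - c m := by
      intro b T D hD
      rcases condPMF_support _ _ _ _ hD with h | h
      · rw [hdflt, PMF.support_pure, Set.mem_singleton_iff] at h
        rw [h, Multiset.card_replicate]
      · exact hJcard b (T, D) h
    have hVadd_card : ∀ b S T', T' ∈ (Vadd b S).support →
        Multiset.card T' = Multiset.card S + (Multiset.card S - c (Multiset.card S)) := by
      intro b S T' hT'
      by_cases hS : Multiset.card S = m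
      · simp only [hVadd] at hT'
        rw [if_pos hS, PMF.mem_support_bind_iff] at hT'
        obtain ⟨T, hT, hT'⟩ := hT'
        rw [PMF.mem_support_map_iff] at hT'
        obtain ⟨D, hD, rfl⟩ := hT'
        rw [Multiset.card_add, hcnd_card b T D hD, hS]
      · simp only [hVadd] at hT'
        rw [if_neg hS, PMF.support_pure, Set.mem_singleton_iff] at hT'
        rw [hT', Multiset.card_add, Multiset.card_replicate]
    have hAdd : IsAdditive Va := by
      intro S T' hT'
      simp only [hVa] at hT'
      rw [PMF.mem_support_bind_iff] at hT'
      obtain ⟨b, _, hT'⟩ := hT'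
      by_cases hS : Multiset.card S = m
      · simp only [hVadd] at hT'
        rw [if_pos hS, PMF.mem_support_bind_iff] at hT'
        obtain ⟨T, hT, hT'⟩ := hT'
        rw [PMF.mem_support_map_iff] at hT'
        obtain ⟨D, _, rfl⟩ := hT'
        exact le_self_add
      · simp only [hVadd] at hT'
        rw [if_neg hS, PMF.support_pure, Set.mem_singleton_iff] at hT'
        rw [hT']
        exact le_self_add
    have hFB : FixedBudgetAdd Va η := by
      refine ⟨fun n => n + (n - c n), ?_, ?_⟩
      · intro S T' hT'
        simp only [hVa] at hT'
        rw [PMF.mem_support_bind_iff] at hT'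
        obtain ⟨b, _, hT'⟩ := hT'
        exact hVadd_card b S T' hT'
      · intro n
        have h := hcb n
        have hle := hcle n
        have hcast : ((n + (n - c n) : ℕ) : ℝ) - n = (n : ℝ) - c n := by
          rw [Nat.cast_add, Nat.cast_sub hle]; ring
        rw [hcast]
        exact h
    have hL : RobustLearnerFor C A mc Va (α * η) := hlearn Va η hη0 hη1 hAdd hFB
    have hsep' : ∀ q ∈ Q.support, 2 * (α * η) + 2 * ε < tv p q := by
      intro q hq
      calc 2 * (α * η) + 2 * ε = 2 * α * η + 2 * ε := by ring
        _ < tv p q := hsep q hq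
    obtain ⟨g1, g2⟩ := learn_gap C A mc Va (α * η) hL ε δ hγ0 hγ1 hδ0 hδ1 p hp Q hQC hsep'
    rw [← hmdef] at g1 g2
    rw [← hP1] at g1
    rw [← hP2] at g2
    set E : Set (Multiset X) := {T | tv (A T) p ≤ α * η + ε} with hEdef
    -- decomposition over the coin
    have hevtmix : ∀ P : PMF (Multiset X), evt (P.bind Va) E =
        (evt (P.bind (Vadd true)) E + evt (P.bind (Vadd false)) E) / 2 := by
      intro P
      have hmix : P.bind Va = (PMF.uniformOfFintype Bool).bind (fun b => P.bind (Vadd b)) :=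
        PMF.bind_comm P (PMF.uniformOfFintype Bool) (fun S b => Vadd b S)
      rw [hmix, evt_bind, tsum_bool]
      simp only [PMF.uniformOfFintype_apply]
      rw [show ((Fintype.card Bool : ℝ≥0∞)⁻¹).toReal = 1 / 2 by
        simp [ENNReal.toReal_inv]]
      ring
    -- structural equalities
    set K : Bool → Multiset X × Multiset X → PMF (Multiset X) :=
      fun b x => (cnd b x.1).map (fun D => x.1 + x.2 + D) with hK
    have hEQ1 : ∀ b b' : Bool, (src b').bind (Vadd b) = (J b').bind (K b) := by
      intro b b'
      simp only [hJ]
      rw [PMF.bind_bind]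
      refine st8_bind_congr _ _ _ (fun S hS => ?_)
      have hSm := hsrc_card b' S hS
      rw [PMF.bind_map]
      simp only [hVadd]
      rw [if_pos hSm]
      refine st8_bind_congr _ _ _ (fun T hT => ?_)
      have hTS : T ≤ S := hVs _ _ hT
      have hTSS : T + (S - T) = S := by rw [add_comm]; exact tsub_add_cancel_of_le hTS
      show (cnd b T).map (fun D => S + D) =
        (cnd b T).map (fun D => T + (S - T) + D)
      rw [hTSS]
    have hinner : ∀ T : Multiset X,
        (cnd true T).bind (fun D => K false (T, D)) =
        (cnd false T).bind (fun D => K true (T, D)) := by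
      intro T
      show (cnd true T).bind (fun D => (cnd false T).map (fun D' => T + D + D')) =
        (cnd false T).bind (fun D => (cnd true T).map (fun D' => T + D + D'))
      have hm1 : ∀ (μ ν : PMF (Multiset X)),
          μ.bind (fun D => ν.map (fun D' => T + D + D')) =
          ν.bind (fun D => μ.map (fun D' => T + D + D')) := by
        intro μ ν
        have hmap : ∀ (ρ : PMF (Multiset X)) (g : Multiset X → Multiset X),
            ρ.map g = ρ.bind (fun y => PMF.pure (g y)) := fun ρ g => rfl
        simp only [hmap]
        rw [PMF.bind_comm μ ν (fun D y => PMF.pure (T + D + y))]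
        refine st8_bind_congr _ _ _ (fun a _ => ?_)
        refine st8_bind_congr _ _ _ (fun b _ => ?_)
        rw [add_right_comm]
      exact hm1 _ _
    have hmargT : ∀ b' : Bool, (J b').map Prod.fst = (src b').bind Vs := by
      intro b'
      simp only [hJ]
      rw [PMF.map_bind]
      refine st8_bind_congr _ _ _ (fun S _ => ?_)
      rw [PMF.map_comp]
      show (Vs S).map (fun T => T) = Vs S
      exact PMF.map_id (Vs S)
    have hcross : evt (P1.bind (Vadd false)) E - evt (P2.bind (Vadd true)) E ≤
        tv (P1.bind Vs) (P2.bind Vs) := by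
      have e1 : P1.bind (Vadd false) = (P1.bind Vs).bind
          (fun T => (cnd true T).bind (fun D => K false (T, D))) := by
        have h := hEQ1 false true
        rw [hsrcT] at h
        rw [h, st8_disint (J true) dflt (K false)]
        rw [hmargT true, hsrcT]
      have e2 : P2.bind (Vadd true) = (P2.bind Vs).bind
          (fun T => (cnd true T).bind (fun D => K false (T, D))) := by
        have h := hEQ1 true false
        rw [hsrcF] at h
        rw [h, st8_disint (J false) dflt (K true)]
        rw [hmargT false, hsrcF]
        refine st8_bind_congr _ _ _ (fun T _ => ?_)
        exact (hinner T).symm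
      rw [e1, e2]
      exact evt_bind_sub_le _ _ _ E
    have hclose' : tv (P1.bind Vs) (P2.bind Vs) < ζ := by
      rw [show P1.bind Vs = advPush Vs P1 from rfl, show P2.bind Vs = advPush Vs P2 from rfl,
        tv_comm]
      exact hclose
    have d1 := hevtmix P1
    have d2 := hevtmix P2
    have ha1 : evt (P1.bind (Vadd true)) E ≤ 1 := evt_le_one _ _
    have ha2 : 0 ≤ evt (P2.bind (Vadd false)) E := evt_nonneg _ _
    linarith
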